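/- Let b ≥ 2 and k, n ≥ 1 be integers and let a = n mod k. Then c_k^b(n) ≡ c_k^b(a) (mod c_k^b(1)), where in the case a = 0 one has c_k^b(0) = k. -/

import Mathlib

/-- `ckb b k n = 1 + b^n + b^(2n) + ⋯ + b^((k-1)n)`; note `ckb b k 0 = k`. -/
def ckb (b k n : ℕ) : ℕ := ∑ i ∈ Finset.range k, b ^ (i * n)

lemma sum_modEq {s : Finset ℕ} {f g : ℕ → ℕ} {M : ℕ}
    (h : ∀ i ∈ s, f i ≡ g i [MOD M]) :
    (∑ i ∈ s, f i) ≡ (∑ i ∈ s, g i) [MOD M] := by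
  classical
  induction s using Finset.induction with
  | empty => rfl
  | insert _ _ hx ih =>
    rw [Finset.sum_insert hx, Finset.sum_insert hx]
    exact Nat.ModEq.add (h _ (Finset.mem_insert_self _ _))
      (ih fun i hi => h i (Finset.mem_insert_of_mem hi))

lemma pow_k_modEq_one (b k : ℕ) (hb : 1 ≤ b) : b ^ k ≡ 1 [MOD ckb b k 1] := by
  have h1 : 1 ≤ b ^ k := Nat.one_le_pow _ _ hb
  rw [Nat.ModEq.comm, Nat.modEq_iff_dvd' h1]
  have : ((ckb b k 1 : ℤ)) ∣ (b : ℤ) ^ k - 1 := by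
    refine Dvd.intro ((b : ℤ) - 1) ?_
    rw [← geom_sum_mul (b : ℤ) k]
    simp [ckb, mul_comm]
  have h2 : ((ckb b k 1 : ℤ)) ∣ ((b ^ k - 1 : ℕ) : ℤ) := by
    rwa [Nat.cast_sub h1, Nat.cast_pow, Nat.cast_one]
  exact_mod_cast h2

lemma pow_modEq (b k M m : ℕ) (h : b ^ k ≡ 1 [MOD M]) (hk : 0 < k) :
    b ^ m ≡ b ^ (m % k) [MOD M] := by
  conv_lhs => rw [← Nat.div_add_mod m k]
  rw [pow_add, pow_mul]
  calc (b ^ k) ^ (m / k) * b ^ (m % k)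
      ≡ 1 ^ (m / k) * b ^ (m % k) [MOD M] := Nat.ModEq.mul (h.pow _) rfl
    _ = b ^ (m % k) := by rw [one_pow, one_mul]

/-- For `b ≥ 2`, `k, n ≥ 1` and `a = n mod k`, we have `c_k^b(n) ≡ c_k^b(a) (mod c_k^b(1))`
(where `c_k^b(0) = k`). -/
theorem ckb_modEq_ckb_mod (b k n : ℕ) (hb : 2 ≤ b) (hk : 1 ≤ k) (hn : 1 ≤ n) :
    ckb b k n ≡ ckb b k (n % k) [MOD ckb b k 1] := by
  have h1 : b ^ k ≡ 1 [MOD ckb b k 1] := pow_k_modEq_one b k (le_trans one_le_two hb)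
  unfold ckb
  refine sum_modEq fun i _ => ?_
  calc b ^ (i * n) ≡ b ^ (i * n % k) [MOD ckb b k 1] := pow_modEq b k _ _ h1 hk
    _ = b ^ (i * (n % k) % k) := by
        rw [(Nat.ModEq.mul_left i (Nat.mod_modEq n k)).symm]
    _ ≡ b ^ (i * (n % k)) [MOD ckb b k 1] := (pow_modEq b k _ _ h1 hk).symm
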